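/- arXiv:0704.0260 — 5 statements merged into one kernel-verified Lean document; each statement's English description precedes it below -/
import Mathlib

section
/- For each integer j with 1 ≤ j ≤ m and each k ∈ ℤ, the function (r²-1)^{j-1} r^{|k|} e^{ikt} satisfies Δ^m u = 0 in the open unit disk, i.e. it is m-harmonic. -/
/-- The Laplacian in polar coordinates:
`Δu = ∂²u/∂r² + (1/r) ∂u/∂r + (1/r²) ∂²u/∂t²`. -/
noncomputable def polarLap (u : ℝ → ℝ → ℂ) (r t : ℝ) : ℂ :=
  iteratedDeriv 2 (fun s => u s t) r + (1 / (r : ℂ)) * deriv (fun s => u s t) r +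
    (1 / (r : ℂ) ^ 2) * iteratedDeriv 2 (fun s => u r s) t

/-- The polar Laplacian as an operator on functions of `(r, t)`. -/
noncomputable def polarLapFun (u : ℝ → ℝ → ℂ) : ℝ → ℝ → ℂ := fun r t => polarLap u r t

open Polynomial

/-- Auxiliary operator on polynomials: `T q = 4(X+1) q'' + (4a+4) q'`. -/
noncomputable def Tpoly (a : ℕ) (q : Polynomial ℂ) : Polynomial ℂ :=
  C 4 * (X + 1) * derivative (derivative q) + C ((4 * a + 4 : ℕ) : ℂ) * derivative q

/-- `W a q = q(X² - 1) * X^a`. -/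
noncomputable def Wpoly (a : ℕ) (q : Polynomial ℂ) : Polynomial ℂ :=
  q.comp (X ^ 2 - 1) * X ^ a

/-- `uP k P (s, τ) = P(s) e^{ikτ}`. -/
noncomputable def uP (k : ℤ) (P : Polynomial ℂ) : ℝ → ℝ → ℂ :=
  fun s τ => P.eval (s : ℂ) * Complex.exp (Complex.I * k * τ)

lemma key (a : ℕ) (q : Polynomial ℂ) (z : ℂ) :
    z ^ 2 * ((Wpoly a q).derivative.derivative.eval z)
      + z * ((Wpoly a q).derivative.eval z)
      - (a : ℂ) ^ 2 * (Wpoly a q).eval z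
    = (Tpoly a q).eval (z ^ 2 - 1) * z ^ (a + 2) := by
  rcases a with _ | _ | b <;>
    simp [Wpoly, Tpoly, derivative_mul, derivative_comp, derivative_X_pow, eval_mul, eval_comp,
      eval_add, eval_sub, eval_pow, eval_one, eval_X, eval_C] <;>
    push_cast <;> ring

lemma hasDeriv_poly (P : Polynomial ℂ) (c : ℂ) (s : ℝ) :
    HasDerivAt (fun x : ℝ => P.eval (x : ℂ) * c) (P.derivative.eval (s : ℂ) * c) s :=
  ((P.hasDerivAt (s : ℂ)).comp_ofReal).mul_const c

lemma deriv_poly (P : Polynomial ℂ) (c : ℂ) :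
    deriv (fun x : ℝ => P.eval (x : ℂ) * c) = fun x : ℝ => P.derivative.eval (x : ℂ) * c :=
  funext fun s => (hasDeriv_poly P c s).deriv

lemma hasDeriv_cexpE (k : ℤ) (c : ℂ) (τ : ℝ) :
    HasDerivAt (fun τ : ℝ => c * Complex.exp (Complex.I * k * τ))
      (c * (Complex.I * k) * Complex.exp (Complex.I * k * τ)) τ := by
  have h1 : HasDerivAt (fun τ : ℝ => Complex.I * k * (τ : ℂ)) (Complex.I * k) τ := by
    simpa using (Complex.ofRealCLM.hasDerivAt (x := τ)).const_mul (Complex.I * k)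
  have := (h1.cexp).const_mul c
  exact this.congr_deriv (by ring)

lemma deriv_cexpE (k : ℤ) (c : ℂ) :
    deriv (fun τ : ℝ => c * Complex.exp (Complex.I * k * τ))
      = fun τ : ℝ => c * (Complex.I * k) * Complex.exp (Complex.I * k * τ) :=
  funext fun τ => (hasDeriv_cexpE k c τ).deriv

lemma natAbs_sq_cast (k : ℤ) : ((k.natAbs : ℂ)) ^ 2 = (k : ℂ) ^ 2 := by
  have h : ((k.natAbs : ℤ)) ^ 2 = k ^ 2 := Int.natAbs_pow_two k
  have e1 : ((k.natAbs : ℂ)) = (((k.natAbs : ℤ)) : ℂ) := (Int.cast_natCast (R := ℂ) k.natAbs).symm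
  rw [e1, ← Int.cast_pow, h, Int.cast_pow]

lemma lap_uP (k : ℤ) (q : Polynomial ℂ) (r t : ℝ) (hr : r ≠ 0) :
    polarLap (uP k (Wpoly k.natAbs q)) r t = uP k (Wpoly k.natAbs (Tpoly k.natAbs q)) r t := by
  set a := k.natAbs with ha
  set P := Wpoly a q with hP
  set c := Complex.exp (Complex.I * k * t) with hc
  have hfs : (fun s : ℝ => uP k P s t) = fun s : ℝ => P.eval (s : ℂ) * c := rfl
  have hft : (fun τ : ℝ => uP k P r τ)
      = fun τ : ℝ => P.eval (r : ℂ) * Complex.exp (Complex.I * k * τ) := rfl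
  have hs2 : iteratedDeriv 2 (fun s : ℝ => uP k P s t) r
      = P.derivative.derivative.eval (r : ℂ) * c := by
    rw [iteratedDeriv_succ, iteratedDeriv_one, hfs, deriv_poly, deriv_poly]
  have hs1 : deriv (fun s : ℝ => uP k P s t) r = P.derivative.eval (r : ℂ) * c := by
    rw [hfs, deriv_poly]
  have hk2 : (Complex.I * k) * (Complex.I * k) = -((a : ℂ)) ^ 2 := by
    have hna := natAbs_sq_cast k
    rw [ha, hna, show (Complex.I * k) * (Complex.I * k) = Complex.I ^ 2 * (k : ℂ) ^ 2 by ring,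
      Complex.I_sq]
    ring
  have ht2 : iteratedDeriv 2 (fun τ : ℝ => uP k P r τ) t
      = P.eval (r : ℂ) * (-((a : ℂ)) ^ 2) * c := by
    rw [iteratedDeriv_succ, iteratedDeriv_one, hft, deriv_cexpE, deriv_cexpE]
    linear_combination P.eval (r : ℂ) * c * hk2
  have hrc : (r : ℂ) ≠ 0 := Complex.ofReal_ne_zero.mpr hr
  have hkey := key a q (r : ℂ)
  show iteratedDeriv 2 (fun s => uP k P s t) r + (1 / (r : ℂ)) * deriv (fun s => uP k P s t) r +
      (1 / (r : ℂ) ^ 2) * iteratedDeriv 2 (fun s => uP k P r s) t = _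
  rw [hs2, hs1, ht2]
  show _ = (Wpoly a (Tpoly a q)).eval (r : ℂ) * c
  rw [Wpoly, eval_mul, eval_comp]
  simp only [eval_pow, eval_sub, eval_one, eval_X]
  rw [div_mul_eq_mul_div, div_mul_eq_mul_div, one_mul, one_mul]
  field_simp
  linear_combination c * hkey

lemma lap_congr (v w : ℝ → ℝ → ℂ) (h : ∀ s τ : ℝ, s ≠ 0 → v s τ = w s τ) (r t : ℝ)
    (hr : r ≠ 0) : polarLap v r t = polarLap w r t := by
  have hs : (fun s : ℝ => v s t) =ᶠ[nhds r] (fun s : ℝ => w s t) :=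
    (eventually_ne_nhds hr).mono fun s hs => h s t hs
  have ht : (fun τ : ℝ => v r τ) = fun τ : ℝ => w r τ := funext fun τ => h r τ hr
  unfold polarLap
  simp only [ht, iteratedDeriv_succ, iteratedDeriv_zero]
  rw [hs.deriv.deriv_eq, hs.deriv_eq]

lemma iter_uP (k : ℤ) (q : Polynomial ℂ) (m : ℕ) :
    ∀ r t : ℝ, r ≠ 0 →
      polarLapFun^[m] (uP k (Wpoly k.natAbs q)) r t
        = uP k (Wpoly k.natAbs ((Tpoly k.natAbs)^[m] q)) r t := by
  induction m generalizing q with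
  | zero => intro r t _; rfl
  | succ n ih =>
    intro r t hr
    rw [Function.iterate_succ_apply']
    calc polarLapFun (polarLapFun^[n] (uP k (Wpoly k.natAbs q))) r t
        = polarLap (polarLapFun^[n] (uP k (Wpoly k.natAbs q))) r t := rfl
      _ = polarLap (uP k (Wpoly k.natAbs ((Tpoly k.natAbs)^[n] q))) r t :=
          lap_congr _ _ (fun s τ hs => ih q s τ hs) r t hr
      _ = uP k (Wpoly k.natAbs (Tpoly k.natAbs ((Tpoly k.natAbs)^[n] q))) r t :=
          lap_uP k _ r t hr
      _ = uP k (Wpoly k.natAbs ((Tpoly k.natAbs)^[n + 1] q)) r t := by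
          rw [Function.iterate_succ_apply']

lemma Tpoly_zero (a : ℕ) : Tpoly a 0 = 0 := by simp [Tpoly]

lemma Tpoly_natDegree (a : ℕ) (q : Polynomial ℂ) (hq : q.natDegree ≠ 0) :
    (Tpoly a q).natDegree ≤ q.natDegree - 1 := by
  set d := q.natDegree with hd
  refine (natDegree_add_le _ _).trans (max_le ?_ ?_)
  · by_cases h1 : (derivative q).natDegree = 0
    · rcases natDegree_eq_zero.mp h1 with ⟨c, hc⟩
      have : derivative (derivative q) = 0 := by rw [← hc]; simp
      simp [this]
    · have h2 : (derivative (derivative q)).natDegree < (derivative q).natDegree :=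
        natDegree_derivative_lt h1
      have h3 : (derivative q).natDegree < d := natDegree_derivative_lt hq
      refine (natDegree_mul_le).trans ?_
      have hC : (Polynomial.C (4 : ℂ) * (X + 1)).natDegree ≤ 1 := by
        refine (natDegree_mul_le).trans ?_
        have hx1 : ((X : Polynomial ℂ) + 1).natDegree = 1 := by
          simpa using natDegree_X_add_C (1 : ℂ)
        simp [hx1]
      omega
  · refine (natDegree_mul_le).trans ?_
    have := natDegree_derivative_le q
    simp only [natDegree_C, zero_add]
    omega

lemma T_iter_zero (a : ℕ) : ∀ m q, Polynomial.natDegree q < m → (Tpoly a)^[m] q = 0 := by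
  intro m
  induction m with
  | zero => intro q hq; omega
  | succ n ih =>
    intro q hq
    rw [Function.iterate_succ_apply]
    by_cases h0 : q.natDegree = 0
    · rcases natDegree_eq_zero.mp h0 with ⟨c, hc⟩
      have hTq : Tpoly a q = 0 := by rw [← hc]; simp [Tpoly]
      rw [hTq]
      exact Function.iterate_fixed (Tpoly_zero a) n
    · have h1 : (Tpoly a q).natDegree ≤ q.natDegree - 1 := Tpoly_natDegree a q h0
      exact ih _ (by omega)

/-- For `1 ≤ j ≤ m` and `k ∈ ℤ`, the function `(r²-1)^(j-1) r^(|k|) e^(ikt)` satisfies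
`Δ^m u = 0` in the open unit disk, i.e. it is `m`-harmonic. -/
theorem stmt7 (m j : ℕ) (hj : 1 ≤ j) (hjm : j ≤ m) (k : ℤ) :
    ∀ r t : ℝ, 0 < r → r < 1 →
      (polarLapFun^[m]
        (fun s τ =>
          ((s : ℂ) ^ 2 - 1) ^ (j - 1) * (s : ℂ) ^ k.natAbs *
            Complex.exp (Complex.I * k * τ))) r t = 0 := by
  intro r t hr _
  have h0 : (fun s τ : ℝ =>
        ((s : ℂ) ^ 2 - 1) ^ (j - 1) * (s : ℂ) ^ k.natAbs * Complex.exp (Complex.I * k * τ))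
      = uP k (Wpoly k.natAbs (X ^ (j - 1))) := by
    funext s τ
    simp [uP, Wpoly, eval_mul, eval_comp, eval_pow, eval_sub, eval_one, eval_X, mul_assoc]
  rw [h0, iter_uP k (X ^ (j - 1)) m r t (ne_of_gt hr),
    T_iter_zero k.natAbs m _ (by rw [natDegree_X_pow]; omega)]
  simp [uP, Wpoly]
end

section
/- Suppose (c_k)_{k∈ℤ} satisfies |c_k| ≤ c e^{α|k|} for every α>0 (with c depending on α), and let v be the solution attempt u₂(r,t) = (1/4)(r²-1) ∑_{k∈ℤ} (r^{|k|}/(|k|+1)) c_k e^{ikt}. Then Δu₂(r,t) = ∑_{k∈ℤ} c_k r^{|k|} e^{ikt} in the open unit disk. -/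
open Complex

namespace Stmt12A


/- per-term algebraic identity -/
lemma perterm (n : ℕ) (x B : ℂ) (hx : x ≠ 0) :
    (1/2 : ℂ)*(x^n*B) + (1/4)*(2*x)*((n:ℂ)*x^(n-1)*B)
      + ((1/4)*(2*x)*((n:ℂ)*x^(n-1)*B)
        + (1/4)*(x^2-1)*((n:ℂ)*(((n-1:ℕ)):ℂ)*x^(n-1-1)*B))
      + (1/x)*((1/4)*(2*x)*(x^n*B) + (1/4)*(x^2-1)*((n:ℂ)*x^(n-1)*B))
      + (1/x^2)*((1/4)*(x^2-1)*(-((n:ℂ)^2)*x^n*B))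
    = ((n:ℂ)+1) * x^n * B := by
  match n with
  | 0 => field_simp; ring
  | 1 => push_cast; field_simp; ring
  | (m+2) =>
    show (1/2:ℂ)*(x^(m+2)*B) + (1/4)*(2*x)*((((m+2):ℕ):ℂ)*x^(m+1)*B)
      + ((1/4)*(2*x)*((((m+2):ℕ):ℂ)*x^(m+1)*B)
        + (1/4)*(x^2-1)*((((m+2):ℕ):ℂ)*((((m+1):ℕ)):ℂ)*x^m*B))
      + (1/x)*((1/4)*(2*x)*(x^(m+2)*B) + (1/4)*(x^2-1)*((((m+2):ℕ):ℂ)*x^(m+1)*B))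
      + (1/x^2)*((1/4)*(x^2-1)*(-((((m+2):ℕ):ℂ)^2)*x^(m+2)*B))
      = ((((m+2):ℕ):ℂ)+1) * x^(m+2) * B
    push_cast
    field_simp
    ring

lemma hpowR (n : ℕ) (x : ℝ) : HasDerivAt (fun s : ℝ => (s:ℂ)^n) ((n:ℂ)*(x:ℂ)^(n-1)) x :=
  (hasDerivAt_pow n (x:ℂ)).comp_ofReal

lemma hexpR (k : ℤ) (τ : ℝ) :
    HasDerivAt (fun τ : ℝ => Complex.exp (Complex.I*k*τ))
      (Complex.I*k*Complex.exp (Complex.I*k*τ)) τ := by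
  have h : HasDerivAt (fun z : ℂ => Complex.exp (Complex.I*k*z))
      (Complex.exp (Complex.I*k*τ) * (Complex.I*k)) (τ:ℂ) := by
    simpa using (((hasDerivAt_id ((τ:ℝ):ℂ)).const_mul (Complex.I*(k:ℂ))).cexp)
  simpa [mul_comm] using h.comp_ofReal

lemma norm_exp_I_mul (k : ℤ) (τ : ℝ) : ‖Complex.exp (Complex.I*k*τ)‖ = 1 := by
  rw [Complex.norm_exp]
  simp [Complex.mul_re]

lemma summable_aux {q : ℝ} (hq0 : 0 < q) (hq1 : q < 1) (A : ℝ) :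
    Summable (fun k : ℤ => A * ((k.natAbs:ℝ)+1)^2 * q^(k.natAbs)) := by
  have hq : ‖q‖ < 1 := by rwa [Real.norm_eq_abs, abs_of_pos hq0]
  have h2 : Summable (fun n : ℕ => ((n:ℝ))^2 * q^n) :=
    summable_pow_mul_geometric_of_norm_lt_one 2 hq
  have h1 : Summable (fun n : ℕ => ((n:ℝ))^1 * q^n) :=
    summable_pow_mul_geometric_of_norm_lt_one 1 hq
  have h0 : Summable (fun n : ℕ => q^n) := summable_geometric_of_lt_one hq0.le hq1
  have hnat : Summable (fun n : ℕ => ((n:ℝ)+1)^2 * q^n) := by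
    have := (h2.add ((h1.mul_left 2).add h0))
    refine this.congr fun n => ?_
    ring
  have hA : Summable (fun n : ℕ => A * (((n:ℝ)+1)^2 * q^n)) := hnat.mul_left A
  refine Summable.of_nat_of_neg (hA.congr fun n => ?_) (hA.congr fun n => ?_) <;>
    simp [mul_assoc]

lemma pow_id {q : ℝ} (hq0 : 0 < q) (m j : ℕ) :
    (q^2)^m * (1/q)^(m+j) = q^(m+j) / q^(2*j) := by
  have l1 : (q^2)^m * (1/q)^(m+j) = q^(2*m) / q^(m+j) := by
    rw [← pow_mul, one_div, inv_pow, div_eq_mul_inv]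
  rw [l1, div_eq_div_iff (by positivity) (by positivity), ← pow_add, ← pow_add]
  congr 1
  omega

noncomputable def bb (c : ℤ → ℂ) (t : ℝ) (k : ℤ) : ℂ :=
  c k * Complex.exp (Complex.I * k * t) / ((k.natAbs : ℂ) + 1)

noncomputable def g0 (c : ℤ → ℂ) (t : ℝ) (k : ℤ) (s : ℝ) : ℂ :=
  (s:ℂ) ^ k.natAbs * bb c t k

noncomputable def g1 (c : ℤ → ℂ) (t : ℝ) (k : ℤ) (s : ℝ) : ℂ :=
  (k.natAbs : ℂ) * (s:ℂ) ^ (k.natAbs - 1) * bb c t k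

noncomputable def g2 (c : ℤ → ℂ) (t : ℝ) (k : ℤ) (s : ℝ) : ℂ :=
  (k.natAbs : ℂ) * ((k.natAbs - 1 : ℕ) : ℂ) * (s:ℂ) ^ (k.natAbs - 1 - 1) * bb c t k

noncomputable def ee (c : ℤ → ℂ) (r : ℝ) (k : ℤ) : ℂ :=
  (r:ℂ) ^ k.natAbs * c k / ((k.natAbs : ℂ) + 1)

noncomputable def h0 (c : ℤ → ℂ) (r : ℝ) (k : ℤ) (τ : ℝ) : ℂ :=
  Complex.exp (Complex.I * k * τ) * ee c r k

noncomputable def h1 (c : ℤ → ℂ) (r : ℝ) (k : ℤ) (τ : ℝ) : ℂ :=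
  Complex.I * k * Complex.exp (Complex.I * k * τ) * ee c r k

noncomputable def h2 (c : ℤ → ℂ) (r : ℝ) (k : ℤ) (τ : ℝ) : ℂ :=
  Complex.I * k * (Complex.I * k * Complex.exp (Complex.I * k * τ)) * ee c r k

lemma hg0d (c : ℤ → ℂ) (t : ℝ) (k : ℤ) (x : ℝ) :
    HasDerivAt (g0 c t k) (g1 c t k x) x := by
  have e : g0 c t k = fun s : ℝ => (s:ℂ) ^ k.natAbs * bb c t k := by
    funext s; simp [g0]
  rw [e]
  simpa [g1, mul_assoc] using (hpowR k.natAbs x).mul_const (bb c t k)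

lemma hg1d (c : ℤ → ℂ) (t : ℝ) (k : ℤ) (x : ℝ) :
    HasDerivAt (g1 c t k) (g2 c t k x) x := by
  have e : g1 c t k = fun s : ℝ => (k.natAbs:ℂ) * (s:ℂ) ^ (k.natAbs - 1) * bb c t k := by
    funext s; simp [g1]
  rw [e]
  simpa [g2, mul_assoc] using
    (((hpowR (k.natAbs - 1) x).const_mul ((k.natAbs : ℂ))).mul_const (bb c t k))

lemma hh0d (c : ℤ → ℂ) (r : ℝ) (k : ℤ) (τ : ℝ) :
    HasDerivAt (h0 c r k) (h1 c r k τ) τ := by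
  have e : h0 c r k = fun τ : ℝ => Complex.exp (Complex.I * k * τ) * ee c r k := by
    funext τ; simp [h0]
  rw [e]
  simpa [h1, mul_assoc] using (hexpR k τ).mul_const (ee c r k)

lemma hh1d (c : ℤ → ℂ) (r : ℝ) (k : ℤ) (τ : ℝ) :
    HasDerivAt (h1 c r k) (h2 c r k τ) τ := by
  have e : h1 c r k = fun τ : ℝ => Complex.I * k * Complex.exp (Complex.I * k * τ) * ee c r k := by
    funext τ; simp [h1]
  rw [e]
  have h := (hexpR k τ).const_mul (Complex.I * (k:ℂ))
  have h2' := h.mul_const (ee c r k)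
  exact h2'

lemma norm_natcast_add_one (N : ℕ) : ‖((N:ℂ)+1)‖ = (N:ℝ)+1 := by
  rw [show ((N:ℂ)+1) = ((N+1:ℕ):ℂ) by push_cast; ring, Complex.norm_natCast]
  push_cast; ring

lemma norm_bb (c : ℤ → ℂ) (t : ℝ) (k : ℤ) : ‖bb c t k‖ ≤ ‖c k‖ := by
  rw [bb, norm_div, norm_mul, norm_exp_I_mul, mul_one, norm_natcast_add_one]
  have h1 : (1:ℝ) ≤ (k.natAbs:ℝ)+1 := by
    have := Nat.cast_nonneg (α := ℝ) k.natAbs; linarith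
  exact div_le_self (norm_nonneg _) h1

lemma norm_ee (c : ℤ → ℂ) (r : ℝ) (k : ℤ) : ‖ee c r k‖ ≤ |r|^k.natAbs * ‖c k‖ := by
  rw [ee, norm_div, norm_mul, norm_natcast_add_one, norm_pow]
  have h1 : (1:ℝ) ≤ (k.natAbs:ℝ)+1 := by
    have := Nat.cast_nonneg (α := ℝ) k.natAbs; linarith
  calc ‖(r:ℂ)‖^k.natAbs * ‖c k‖ / ((k.natAbs:ℝ)+1) ≤ ‖(r:ℂ)‖^k.natAbs * ‖c k‖ / 1 := by
        gcongr
    _ = |r|^k.natAbs * ‖c k‖ := by rw [div_one, Complex.norm_real, Real.norm_eq_abs]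


lemma helper_le {q C b : ℝ} (hq0 : 0 < q) (hC0 : 0 ≤ C) (hb : q^4 ≤ b) (hb0 : 0 < b)
    (N : ℕ) {a : ℝ} (ha : 0 ≤ a) (haN : a ≤ ((N:ℝ)+1)^2) :
    C * a * (q^N / b) ≤ (C/q^4) * ((N:ℝ)+1)^2 * q^N := by
  rw [show C*a*(q^N/b) = (C*a/b)*q^N by ring,
      show (C/q^4)*((N:ℝ)+1)^2*q^N = (C*((N:ℝ)+1)^2/q^4)*q^N by ring]
  apply mul_le_mul_of_nonneg_right _ (by positivity)
  rw [div_le_div_iff₀ hb0 (by positivity)]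
  calc C*a*q^4 ≤ C*(((N:ℝ)+1)^2)*b := by gcongr
    _ = C*((N:ℝ)+1)^2*b := by ring

section Bounds

lemma norm_kC (k : ℤ) : ‖(k:ℂ)‖ = (k.natAbs:ℝ) := by
  rw [Complex.norm_intCast, Nat.cast_natAbs]
  exact Int.cast_abs.symm

lemma one_le_sq_succ (N : ℕ) : (1:ℝ) ≤ ((N:ℝ)+1)^2 := by
  have := Nat.cast_nonneg (α := ℝ) N
  nlinarith

lemma norm_I_int (k : ℤ) : ‖Complex.I * (k:ℂ)‖ = (k.natAbs:ℝ) := by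
  rw [norm_mul, Complex.norm_I, one_mul, norm_kC]

variable {q C : ℝ} (c : ℤ → ℂ) (t : ℝ)

lemma bound0 (hq0 : 0 < q) (hq1 : q < 1) (hC0 : 0 ≤ C)
    (k : ℤ) (hck : ‖c k‖ ≤ C * (1/q)^k.natAbs) (s : ℝ) (hs : |s| ≤ q^2) :
    ‖g0 c t k s‖ ≤ (C/q^4) * ((k.natAbs:ℝ)+1)^2 * q^(k.natAbs) := by
  have hbb : ‖bb c t k‖ ≤ C * (1/q)^k.natAbs := (norm_bb c t k).trans hck
  have hp := pow_id hq0 k.natAbs 0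
  simp only [Nat.add_zero, Nat.mul_zero, pow_zero, div_one] at hp
  calc ‖g0 c t k s‖ = |s|^k.natAbs * ‖bb c t k‖ := by
        rw [g0, norm_mul, norm_pow, Complex.norm_real, Real.norm_eq_abs]
    _ ≤ (q^2)^k.natAbs * (C * (1/q)^k.natAbs) := by gcongr
    _ = C * 1 * (q^k.natAbs / 1) := by
        rw [show (q^2)^k.natAbs * (C * (1/q)^k.natAbs)
            = C * ((q^2)^k.natAbs * (1/q)^k.natAbs) by ring, hp]; ring
    _ ≤ _ := helper_le hq0 hC0 (pow_le_one₀ hq0.le hq1.le)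
        one_pos k.natAbs zero_le_one (one_le_sq_succ _)

lemma bound1 (hq0 : 0 < q) (hq1 : q < 1) (hC0 : 0 ≤ C)
    (k : ℤ) (hck : ‖c k‖ ≤ C * (1/q)^k.natAbs) (s : ℝ) (hs : |s| ≤ q^2) :
    ‖g1 c t k s‖ ≤ (C/q^4) * ((k.natAbs:ℝ)+1)^2 * q^(k.natAbs) := by
  have hbb : ‖bb c t k‖ ≤ C * (1/q)^k.natAbs := (norm_bb c t k).trans hck
  rcases hN : k.natAbs with _ | m
  · rw [hN] at hbb
    rw [g1, hN]
    simp only [Nat.cast_zero, zero_mul]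
    have : (0:ℝ) ≤ (C/q^4) * ((0:ℝ)+1)^2 * q^0 := by positivity
    simpa using this
  · rw [hN] at hbb
    have hp := pow_id hq0 m 1
    have hq2 : q^4 ≤ q^2 := by
      nlinarith [pow_pos hq0 2, pow_le_one₀ hq0.le hq1.le (n := 2), sq_nonneg q]
    calc ‖g1 c t k s‖ = ((m+1:ℕ):ℝ) * |s|^m * ‖bb c t k‖ := by
          rw [g1, hN, norm_mul, norm_mul, norm_pow, Complex.norm_natCast,
            Complex.norm_real, Real.norm_eq_abs]
          norm_num
      _ ≤ ((m+1:ℕ):ℝ) * (q^2)^m * (C * (1/q)^(m+1)) := by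
          have h1 : |s|^m ≤ (q^2)^m := pow_le_pow_left₀ (abs_nonneg s) hs m
          have h2 : (0:ℝ) ≤ ((m+1:ℕ):ℝ) := Nat.cast_nonneg _
          gcongr
      _ = C * ((m+1:ℕ):ℝ) * (q^(m+1) / q^(2*1)) := by
          rw [show ((m+1:ℕ):ℝ) * (q^2)^m * (C * (1/q)^(m+1))
              = C * ((m+1:ℕ):ℝ) * ((q^2)^m * (1/q)^(m+1)) by ring, hp]
      _ ≤ _ := by
          refine helper_le hq0 hC0 (by norm_num [hq2]) (by positivity) (m+1)
            (Nat.cast_nonneg _) ?_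
          push_cast
          nlinarith [Nat.cast_nonneg (α := ℝ) m]

lemma bound2 (hq0 : 0 < q) (hq1 : q < 1) (hC0 : 0 ≤ C)
    (k : ℤ) (hck : ‖c k‖ ≤ C * (1/q)^k.natAbs) (s : ℝ) (hs : |s| ≤ q^2) :
    ‖g2 c t k s‖ ≤ (C/q^4) * ((k.natAbs:ℝ)+1)^2 * q^(k.natAbs) := by
  have hbb : ‖bb c t k‖ ≤ C * (1/q)^k.natAbs := (norm_bb c t k).trans hck
  rcases hN : k.natAbs with _ | _ | m
  · rw [g2, hN]
    simp only [Nat.cast_zero, zero_mul]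
    have : (0:ℝ) ≤ (C/q^4) * ((0:ℝ)+1)^2 * q^0 := by positivity
    simpa using this
  · rw [g2, hN]
    have : (0:ℝ) ≤ (C/q^4) * ((1:ℝ)+1)^2 * q^1 := by positivity
    simpa using this
  · rw [hN] at hbb
    have hp := pow_id hq0 m 2
    calc ‖g2 c t k s‖ = ((m+2:ℕ):ℝ) * ((m+1:ℕ):ℝ) * |s|^m * ‖bb c t k‖ := by
          rw [g2, hN]
          show ‖((m+2:ℕ):ℂ) * (((m+2) - 1:ℕ):ℂ) * (s:ℂ)^((m+2) - 1 - 1) * bb c t k‖ = _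
          rw [norm_mul, norm_mul, norm_mul, norm_pow, Complex.norm_natCast,
            Complex.norm_natCast, Complex.norm_real, Real.norm_eq_abs]
          norm_num
      _ ≤ ((m+2:ℕ):ℝ) * ((m+1:ℕ):ℝ) * (q^2)^m * (C * (1/q)^(m+2)) := by
          have h1 : |s|^m ≤ (q^2)^m := pow_le_pow_left₀ (abs_nonneg s) hs m
          have h2 : (0:ℝ) ≤ ((m+2:ℕ):ℝ) * ((m+1:ℕ):ℝ) := by positivity
          gcongr
      _ = C * (((m+2:ℕ):ℝ) * ((m+1:ℕ):ℝ)) * (q^(m+2) / q^(2*2)) := by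
          rw [show ((m+2:ℕ):ℝ) * ((m+1:ℕ):ℝ) * (q^2)^m * (C * (1/q)^(m+2))
              = C * (((m+2:ℕ):ℝ) * ((m+1:ℕ):ℝ)) * ((q^2)^m * (1/q)^(m+2)) by ring, hp]
      _ ≤ _ := by
          have hq2 : q^4 ≤ q^2 := by
            nlinarith [pow_pos hq0 2, pow_le_one₀ hq0.le hq1.le (n := 2)]
          refine helper_le hq0 hC0 (by norm_num) (by positivity) (m+2)
            (by positivity) ?_
          push_cast
          nlinarith [Nat.cast_nonneg (α := ℝ) m]

variable (r : ℝ)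

lemma norm_ee_le (hq0 : 0 < q) (k : ℤ) (hck : ‖c k‖ ≤ C * (1/q)^k.natAbs)
    (hr : |r| ≤ q^2) : ‖ee c r k‖ ≤ C * 1 * (q^(k.natAbs) / 1) := by
  have hp := pow_id hq0 k.natAbs 0
  simp only [Nat.add_zero, Nat.mul_zero, pow_zero, div_one] at hp
  calc ‖ee c r k‖ ≤ |r|^k.natAbs * ‖c k‖ := norm_ee c r k
    _ ≤ (q^2)^k.natAbs * (C * (1/q)^k.natAbs) := by gcongr
    _ = C * 1 * (q^(k.natAbs) / 1) := by
        rw [show (q^2)^k.natAbs * (C * (1/q)^k.natAbs)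
            = C * ((q^2)^k.natAbs * (1/q)^k.natAbs) by ring, hp]; ring

lemma boundh0 (hq0 : 0 < q) (hq1 : q < 1) (hC0 : 0 ≤ C)
    (k : ℤ) (hck : ‖c k‖ ≤ C * (1/q)^k.natAbs) (hr : |r| ≤ q^2) (τ : ℝ) :
    ‖h0 c r k τ‖ ≤ (C/q^4) * ((k.natAbs:ℝ)+1)^2 * q^(k.natAbs) := by
  calc ‖h0 c r k τ‖ = ‖ee c r k‖ := by rw [h0, norm_mul, norm_exp_I_mul, one_mul]
    _ ≤ C * 1 * (q^(k.natAbs) / 1) := norm_ee_le c r hq0 k hck hr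
    _ ≤ _ := helper_le hq0 hC0 (pow_le_one₀ hq0.le hq1.le)
        one_pos k.natAbs zero_le_one (one_le_sq_succ _)

lemma boundh1 (hq0 : 0 < q) (hq1 : q < 1) (hC0 : 0 ≤ C)
    (k : ℤ) (hck : ‖c k‖ ≤ C * (1/q)^k.natAbs) (hr : |r| ≤ q^2) (τ : ℝ) :
    ‖h1 c r k τ‖ ≤ (C/q^4) * ((k.natAbs:ℝ)+1)^2 * q^(k.natAbs) := by
  calc ‖h1 c r k τ‖ = (k.natAbs:ℝ) * ‖ee c r k‖ := by
        rw [h1, norm_mul, norm_mul, norm_exp_I_mul, mul_one, norm_I_int]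
    _ ≤ (k.natAbs:ℝ) * (C * 1 * (q^(k.natAbs) / 1)) := by
        have := norm_ee_le c r hq0 k hck hr
        have h2 : (0:ℝ) ≤ (k.natAbs:ℝ) := Nat.cast_nonneg _
        gcongr
    _ = C * (k.natAbs:ℝ) * (q^(k.natAbs) / 1) := by ring
    _ ≤ _ := helper_le hq0 hC0 (pow_le_one₀ hq0.le hq1.le)
        one_pos k.natAbs (Nat.cast_nonneg _)
        (by have := Nat.cast_nonneg (α := ℝ) k.natAbs; nlinarith)

lemma boundh2 (hq0 : 0 < q) (hq1 : q < 1) (hC0 : 0 ≤ C)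
    (k : ℤ) (hck : ‖c k‖ ≤ C * (1/q)^k.natAbs) (hr : |r| ≤ q^2) (τ : ℝ) :
    ‖h2 c r k τ‖ ≤ (C/q^4) * ((k.natAbs:ℝ)+1)^2 * q^(k.natAbs) := by
  calc ‖h2 c r k τ‖ = (k.natAbs:ℝ) * ((k.natAbs:ℝ) * 1) * ‖ee c r k‖ := by
        rw [h2]
        simp only [norm_mul, Complex.norm_I, norm_kC, norm_exp_I_mul]
        ring
    _ ≤ (k.natAbs:ℝ) * ((k.natAbs:ℝ) * 1) * (C * 1 * (q^(k.natAbs) / 1)) := by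
        have := norm_ee_le c r hq0 k hck hr
        have h2 : (0:ℝ) ≤ (k.natAbs:ℝ) * ((k.natAbs:ℝ) * 1) := by positivity
        gcongr
    _ = C * ((k.natAbs:ℝ) * (k.natAbs:ℝ)) * (q^(k.natAbs) / 1) := by ring
    _ ≤ _ := helper_le hq0 hC0 (pow_le_one₀ hq0.le hq1.le)
        one_pos k.natAbs (by positivity)
        (by have := Nat.cast_nonneg (α := ℝ) k.natAbs; nlinarith)

end Bounds


lemma iteratedDeriv_two (f : ℝ → ℂ) : iteratedDeriv 2 f = deriv (deriv f) := by
  rw [show (2:ℕ) = 1 + 1 from rfl, iteratedDeriv_succ, iteratedDeriv_one]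

theorem core (c : ℤ → ℂ) {q C : ℝ} (hq0 : 0 < q) (hq1 : q < 1) (hC0 : 0 ≤ C)
    (hcq : ∀ k : ℤ, ‖c k‖ ≤ C * (1/q)^k.natAbs) (r t : ℝ) (hr : 0 < r) (hrq : r < q^2) :
    polarLap
      (fun s τ => (1/4 : ℂ) * ((s : ℂ) ^ 2 - 1) *
        ∑' k : ℤ, ((s : ℂ) ^ k.natAbs / ((k.natAbs : ℂ) + 1)) * c k *
          Complex.exp (Complex.I * k * τ))
      r t =
    ∑' k : ℤ, c k * (r : ℂ) ^ k.natAbs * Complex.exp (Complex.I * k * t) := by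
  have hrC : (r:ℂ) ≠ 0 := Complex.ofReal_ne_zero.mpr hr.ne'
  have hUsum : Summable (fun k : ℤ => (C/q^4) * ((k.natAbs:ℝ)+1)^2 * q^(k.natAbs)) :=
    summable_aux hq0 hq1 _
  have hSopen : IsOpen (Set.Ioo (r/2) (q^2)) := isOpen_Ioo
  have hSconn : IsPreconnected (Set.Ioo (r/2) (q^2)) := isPreconnected_Ioo
  have hrS : r ∈ Set.Ioo (r/2) (q^2) := ⟨by linarith, hrq⟩
  have habs : ∀ s ∈ Set.Ioo (r/2) (q^2), |s| ≤ q^2 := by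
    intro s hs
    rw [abs_of_pos (by linarith [hs.1] : (0:ℝ) < s)]
    exact hs.2.le
  have habsr : |r| ≤ q^2 := habs r hrS
  have hB0 : ∀ k : ℤ, ∀ s ∈ Set.Ioo (r/2) (q^2),
      ‖g0 c t k s‖ ≤ (C/q^4) * ((k.natAbs:ℝ)+1)^2 * q^(k.natAbs) :=
    fun k s hs => bound0 c t hq0 hq1 hC0 k (hcq k) s (habs s hs)
  have hB1 : ∀ k : ℤ, ∀ s ∈ Set.Ioo (r/2) (q^2),
      ‖g1 c t k s‖ ≤ (C/q^4) * ((k.natAbs:ℝ)+1)^2 * q^(k.natAbs) :=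
    fun k s hs => bound1 c t hq0 hq1 hC0 k (hcq k) s (habs s hs)
  have hB2 : ∀ k : ℤ, ∀ s ∈ Set.Ioo (r/2) (q^2),
      ‖g2 c t k s‖ ≤ (C/q^4) * ((k.natAbs:ℝ)+1)^2 * q^(k.natAbs) :=
    fun k s hs => bound2 c t hq0 hq1 hC0 k (hcq k) s (habs s hs)
  have hb0 : ∀ (k : ℤ) (τ : ℝ),
      ‖h0 c r k τ‖ ≤ (C/q^4) * ((k.natAbs:ℝ)+1)^2 * q^(k.natAbs) :=
    fun k τ => boundh0 c r hq0 hq1 hC0 k (hcq k) habsr τ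
  have hb1 : ∀ (k : ℤ) (τ : ℝ),
      ‖h1 c r k τ‖ ≤ (C/q^4) * ((k.natAbs:ℝ)+1)^2 * q^(k.natAbs) :=
    fun k τ => boundh1 c r hq0 hq1 hC0 k (hcq k) habsr τ
  have hb2 : ∀ (k : ℤ) (τ : ℝ),
      ‖h2 c r k τ‖ ≤ (C/q^4) * ((k.natAbs:ℝ)+1)^2 * q^(k.natAbs) :=
    fun k τ => boundh2 c r hq0 hq1 hC0 k (hcq k) habsr τ
  have hs0 : Summable (fun k => g0 c t k r) :=
    Summable.of_norm_bounded hUsum (fun k => hB0 k r hrS)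
  have hs1 : Summable (fun k => g1 c t k r) :=
    Summable.of_norm_bounded hUsum (fun k => hB1 k r hrS)
  have hs2 : Summable (fun k => g2 c t k r) :=
    Summable.of_norm_bounded hUsum (fun k => hB2 k r hrS)
  have hsh0 : Summable (fun k => h0 c r k t) :=
    Summable.of_norm_bounded hUsum (fun k => hb0 k t)
  have hsh1 : Summable (fun k => h1 c r k t) :=
    Summable.of_norm_bounded hUsum (fun k => hb1 k t)
  have hsh2 : Summable (fun k => h2 c r k t) :=
    Summable.of_norm_bounded hUsum (fun k => hb2 k t)
  -- derivatives of the series in s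
  have hF1 : ∀ x ∈ Set.Ioo (r/2) (q^2),
      HasDerivAt (fun s => ∑' k, g0 c t k s) (∑' k, g1 c t k x) x := fun x hx =>
    hasDerivAt_tsum_of_isPreconnected hUsum hSopen hSconn
      (fun k y _ => hg0d c t k y) (fun k y hy => hB1 k y hy) hrS hs0 hx
  have hF2 : ∀ x ∈ Set.Ioo (r/2) (q^2),
      HasDerivAt (fun s => ∑' k, g1 c t k s) (∑' k, g2 c t k x) x := fun x hx =>
    hasDerivAt_tsum_of_isPreconnected hUsum hSopen hSconn
      (fun k y _ => hg1d c t k y) (fun k y hy => hB2 k y hy) hrS hs1 hx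
  have hP : ∀ x : ℝ, HasDerivAt (fun s : ℝ => (1/4:ℂ)*((s:ℂ)^2-1)) ((1/4:ℂ)*(2*(x:ℂ))) x := by
    intro x
    have h := (((hasDerivAt_pow 2 ((x:ℝ):ℂ)).sub_const 1).const_mul (1/4:ℂ)).comp_ofReal
    convert h using 1
    norm_num
  have hlin : ∀ x : ℝ, HasDerivAt (fun s : ℝ => (1/4:ℂ)*(2*(s:ℂ))) ((1/2:ℂ)) x := by
    intro x
    have h := (((hasDerivAt_id ((x:ℝ):ℂ)).const_mul (2:ℂ)).const_mul (1/4:ℂ)).comp_ofReal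
    convert h using 1
    norm_num
    norm_num
  have hfun1 : (fun s : ℝ => (1/4 : ℂ) * ((s : ℂ) ^ 2 - 1) *
      ∑' k : ℤ, ((s : ℂ) ^ k.natAbs / ((k.natAbs : ℂ) + 1)) * c k *
        Complex.exp (Complex.I * k * t))
      = (fun s : ℝ => (1/4:ℂ)*((s:ℂ)^2-1) * ∑' k, g0 c t k s) := by
    funext s
    congr 1
    exact tsum_congr fun k => by rw [g0, bb]; ring
  have hfun2 : (fun τ : ℝ => (1/4 : ℂ) * ((r : ℂ) ^ 2 - 1) *
      ∑' k : ℤ, ((r : ℂ) ^ k.natAbs / ((k.natAbs : ℂ) + 1)) * c k *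
        Complex.exp (Complex.I * k * τ))
      = (fun τ : ℝ => (1/4:ℂ)*((r:ℂ)^2-1) * ∑' k, h0 c r k τ) := by
    funext τ
    congr 1
    exact tsum_congr fun k => by rw [h0, ee]; ring
  have hd1 : ∀ x ∈ Set.Ioo (r/2) (q^2),
      HasDerivAt (fun s : ℝ => (1/4:ℂ)*((s:ℂ)^2-1) * ∑' k, g0 c t k s)
        ((1/4:ℂ)*(2*(x:ℂ)) * (∑' k, g0 c t k x)
          + (1/4:ℂ)*((x:ℂ)^2-1) * ∑' k, g1 c t k x) x :=
    fun x hx => (hP x).mul (hF1 x hx)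
  have hd2 : HasDerivAt (fun x : ℝ => (1/4:ℂ)*(2*(x:ℂ)) * (∑' k, g0 c t k x)
        + (1/4:ℂ)*((x:ℂ)^2-1) * ∑' k, g1 c t k x)
      (((1/2:ℂ) * (∑' k, g0 c t k r) + (1/4:ℂ)*(2*(r:ℂ)) * (∑' k, g1 c t k r))
        + ((1/4:ℂ)*(2*(r:ℂ)) * (∑' k, g1 c t k r)
          + (1/4:ℂ)*((r:ℂ)^2-1) * ∑' k, g2 c t k r)) r :=
    ((hlin r).mul (hF1 r hrS)).add ((hP r).mul (hF2 r hrS))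
  have hA : iteratedDeriv 2 (fun s : ℝ => (1/4:ℂ)*((s:ℂ)^2-1) * ∑' k, g0 c t k s) r
      = ((1/2:ℂ) * (∑' k, g0 c t k r) + (1/4:ℂ)*(2*(r:ℂ)) * (∑' k, g1 c t k r))
        + ((1/4:ℂ)*(2*(r:ℂ)) * (∑' k, g1 c t k r)
          + (1/4:ℂ)*((r:ℂ)^2-1) * ∑' k, g2 c t k r) := by
    rw [iteratedDeriv_two]
    have hev : deriv (fun s : ℝ => (1/4:ℂ)*((s:ℂ)^2-1) * ∑' k, g0 c t k s)
        =ᶠ[nhds r] (fun x : ℝ => (1/4:ℂ)*(2*(x:ℂ)) * (∑' k, g0 c t k x)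
          + (1/4:ℂ)*((x:ℂ)^2-1) * ∑' k, g1 c t k x) := by
      filter_upwards [hSopen.mem_nhds hrS] with x hx
      exact (hd1 x hx).deriv
    rw [Filter.EventuallyEq.deriv_eq hev]
    exact hd2.deriv
  have hBder : deriv (fun s : ℝ => (1/4:ℂ)*((s:ℂ)^2-1) * ∑' k, g0 c t k s) r
      = (1/4:ℂ)*(2*(r:ℂ)) * (∑' k, g0 c t k r)
        + (1/4:ℂ)*((r:ℂ)^2-1) * ∑' k, g1 c t k r :=
    (hd1 r hrS).deriv
  have hH1 : ∀ τ : ℝ, HasDerivAt (fun y => ∑' k, h0 c r k y) (∑' k, h1 c r k τ) τ :=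
    fun τ => hasDerivAt_tsum hUsum (fun k y => hh0d c r k y) (fun k y => hb1 k y) hsh0 τ
  have hH2 : ∀ τ : ℝ, HasDerivAt (fun y => ∑' k, h1 c r k y) (∑' k, h2 c r k τ) τ :=
    fun τ => hasDerivAt_tsum hUsum (fun k y => hh1d c r k y) (fun k y => hb2 k y) hsh1 τ
  have hCt : iteratedDeriv 2 (fun τ : ℝ => (1/4:ℂ)*((r:ℂ)^2-1) * ∑' k, h0 c r k τ) t
      = (1/4:ℂ)*((r:ℂ)^2-1) * ∑' k, h2 c r k t := by
    rw [iteratedDeriv_two]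
    have e1 : deriv (fun τ : ℝ => (1/4:ℂ)*((r:ℂ)^2-1) * ∑' k, h0 c r k τ)
        = fun τ => (1/4:ℂ)*((r:ℂ)^2-1) * ∑' k, h1 c r k τ := by
      funext τ
      exact ((hH1 τ).const_mul ((1/4:ℂ)*((r:ℂ)^2-1))).deriv
    rw [e1]
    exact ((hH2 t).const_mul ((1/4:ℂ)*((r:ℂ)^2-1))).deriv
  simp only [polarLap]
  rw [hfun1, hfun2, hA, hBder, hCt]
  have H0 : HasSum (fun k => g0 c t k r) (∑' k, g0 c t k r) := hs0.hasSum
  have H1 : HasSum (fun k => g1 c t k r) (∑' k, g1 c t k r) := hs1.hasSum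
  have H2 : HasSum (fun k => g2 c t k r) (∑' k, g2 c t k r) := hs2.hasSum
  have Hh : HasSum (fun k => h2 c r k t) (∑' k, h2 c r k t) := hsh2.hasSum
  have Htot := ((((H0.mul_left (1/2:ℂ)).add (H1.mul_left ((1/4:ℂ)*(2*(r:ℂ))))).add
      ((H1.mul_left ((1/4:ℂ)*(2*(r:ℂ)))).add
        (H2.mul_left ((1/4:ℂ)*((r:ℂ)^2-1))))).add
      (((H0.mul_left ((1/4:ℂ)*(2*(r:ℂ)))).add
        (H1.mul_left ((1/4:ℂ)*((r:ℂ)^2-1)))).mul_left (1/(r:ℂ)))).add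
      ((Hh.mul_left ((1/4:ℂ)*((r:ℂ)^2-1))).mul_left (1/(r:ℂ)^2))
  rw [← Htot.tsum_eq]
  refine tsum_congr fun k => ?_
  have hk2 : ((k:ℂ))^2 = ((k.natAbs:ℂ))^2 := by
    have h := Int.natAbs_sq k
    calc ((k:ℂ))^2 = (((k^2 : ℤ)):ℂ) := by push_cast; ring
      _ = ((((k.natAbs:ℤ)^2 : ℤ)):ℂ) := by rw [h]
      _ = (((k.natAbs:ℤ)):ℂ)^2 := by push_cast; ring
      _ = ((k.natAbs:ℂ))^2 := by norm_cast
  have hh2e : h2 c r k t = -((k.natAbs:ℂ)^2) * (r:ℂ)^k.natAbs * bb c t k := by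
    rw [h2, ee, bb]
    rw [show Complex.I * (k:ℂ) * (Complex.I * (k:ℂ) * Complex.exp (Complex.I*k*t))
        = (Complex.I*Complex.I) * ((k:ℂ)^2 * Complex.exp (Complex.I*k*t)) from by ring,
      Complex.I_mul_I, hk2]
    ring
  rw [g0, g1, g2, hh2e,
    perterm k.natAbs (r:ℂ) (bb c t k) hrC]
  rw [bb]
  have hne : ((k.natAbs:ℂ)+1) ≠ 0 := by
    have := Nat.cast_add_one_ne_zero (R := ℂ) k.natAbs
    push_cast at this ⊢
    exact this
  field_simp

end Stmt12A

/-- If `(c_k)` satisfies the hyperfunction growth condition and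
`u₂(r,t) = (1/4)(r²-1) ∑_{k∈ℤ} (r^(|k|)/(|k|+1)) c_k e^(ikt)`, then
`Δu₂(r,t) = ∑_{k∈ℤ} c_k r^(|k|) e^(ikt)` in the open unit disk. -/
theorem stmt12 (c : ℤ → ℂ)
    (hc : ∀ α : ℝ, 0 < α → ∃ C : ℝ, 0 < C ∧ ∀ k : ℤ, ‖c k‖ ≤ C * Real.exp (α * |(k : ℝ)|))
    (r t : ℝ) (hr : 0 < r) (hr1 : r < 1) :
    polarLap
      (fun s τ => (1/4 : ℂ) * ((s : ℂ) ^ 2 - 1) *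
        ∑' k : ℤ, ((s : ℂ) ^ k.natAbs / ((k.natAbs : ℂ) + 1)) * c k *
          Complex.exp (Complex.I * k * τ))
      r t =
    ∑' k : ℤ, c k * (r : ℂ) ^ k.natAbs * Complex.exp (Complex.I * k * t) := by
  have hρ0 : (0:ℝ) < (1+r)/2 := by linarith
  set q := Real.sqrt ((1+r)/2) with hqdef
  have hq0 : 0 < q := Real.sqrt_pos.mpr hρ0
  have hq2 : q^2 = (1+r)/2 := Real.sq_sqrt hρ0.le
  have hq1 : q < 1 := by nlinarith
  have hrq : r < q^2 := by rw [hq2]; linarith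
  have hα : 0 < Real.log (1/q) := Real.log_pos (one_lt_one_div hq0 hq1)
  obtain ⟨C, hC0, hCb⟩ := hc (Real.log (1/q)) hα
  have hcq : ∀ k : ℤ, ‖c k‖ ≤ C * (1/q)^k.natAbs := by
    intro k
    have h := hCb k
    have habs : |(k:ℝ)| = (k.natAbs:ℝ) := by
      rw [← Complex.norm_intCast]
      exact Stmt12A.norm_kC k
    rw [habs] at h
    calc ‖c k‖ ≤ C * Real.exp (Real.log (1/q) * (k.natAbs:ℝ)) := h
      _ = C * (1/q)^k.natAbs := by
          rw [mul_comm (Real.log (1/q)), Real.exp_nat_mul,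
            Real.exp_log (by positivity)]
  exact Stmt12A.core c hq0 hq1 hC0.le hcq r t hr hrq
end

section
/- For each positive integer j, if (c_k)_{k∈ℤ} satisfies ∑_{k≠0} |c_k|²/|k|^{2j} < ∞ (and c₀ arbitrary), then sup_{0≤r<1} (1-r²)^{2j} ∑_{k∈ℤ} r^{2|k|} |c_k|² < ∞. (Embedding W₂^{-j} ⊂ 𝔅_j.) -/
set_option maxHeartbeats 1000000

lemma aux_pow_mul_one_sub_le (t : ℝ) (h0 : 0 ≤ t) (h1 : t ≤ 1) (n : ℕ) :
    t ^ n * (1 - t) ≤ 1 / (n + 1) := by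
  rw [le_div_iff₀ (by positivity)]
  have hsum : (n + 1 : ℝ) * t ^ n ≤ ∑ i ∈ Finset.range (n + 1), t ^ i := by
    have h : ∀ i ∈ Finset.range (n + 1), t ^ n ≤ t ^ i := fun i hi =>
      pow_le_pow_of_le_one h0 h1 (Nat.lt_succ_iff.mp (Finset.mem_range.mp hi))
    calc (n + 1 : ℝ) * t ^ n = ∑ _i ∈ Finset.range (n + 1), t ^ n := by
          rw [Finset.sum_const, Finset.card_range]; push_cast; ring
      _ ≤ _ := Finset.sum_le_sum h
  have hgeo : (∑ i ∈ Finset.range (n + 1), t ^ i) * (1 - t) ≤ 1 := by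
    have hg := geom_sum_mul t (n + 1)
    nlinarith [pow_nonneg h0 (n + 1)]
  have h1t : 0 ≤ 1 - t := by linarith
  calc t ^ n * (1 - t) * (n + 1) = ((n + 1 : ℝ) * t ^ n) * (1 - t) := by ring
    _ ≤ (∑ i ∈ Finset.range (n + 1), t ^ i) * (1 - t) :=
        mul_le_mul_of_nonneg_right hsum h1t
    _ ≤ 1 := hgeo

lemma aux_key (t : ℝ) (h0 : 0 ≤ t) (h1 : t ≤ 1) (m k : ℕ) (hm : 1 ≤ m) (hk : 1 ≤ k) :
    (1 - t) ^ m * t ^ k ≤ (m : ℝ) ^ m / (k : ℝ) ^ m := by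
  set q := k / m with hq
  have hmq : m * q ≤ k := by
    rw [mul_comm]; exact Nat.div_mul_le_self k m
  have hklt : k < (q + 1) * m := by
    have := Nat.lt_succ_self q
    exact (Nat.div_lt_iff_lt_mul (by omega : 0 < m)).mp this
  have h1t : 0 ≤ 1 - t := by linarith
  have step1 : (1 - t) ^ m * t ^ k ≤ (1 - t) ^ m * t ^ (m * q) := by
    apply mul_le_mul_of_nonneg_left (pow_le_pow_of_le_one h0 h1 hmq) (by positivity)
  have step2 : (1 - t) ^ m * t ^ (m * q) = (t ^ q * (1 - t)) ^ m := by
    rw [mul_pow, pow_mul]; ring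
  have step3 : (t ^ q * (1 - t)) ^ m ≤ (1 / (q + 1 : ℝ)) ^ m := by
    apply pow_le_pow_left₀ (by positivity) (aux_pow_mul_one_sub_le t h0 h1 q)
  have step4 : (1 / (q + 1 : ℝ)) ^ m ≤ ((m : ℝ) / k) ^ m := by
    apply pow_le_pow_left₀ (by positivity)
    rw [div_le_div_iff₀ (by positivity) (by exact_mod_cast hk)]
    have : (k : ℝ) ≤ (q + 1 : ℕ) * m := by exact_mod_cast hklt.le
    push_cast at this ⊢
    linarith
  calc (1 - t) ^ m * t ^ k ≤ (t ^ q * (1 - t)) ^ m := by rw [← step2]; exact step1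
    _ ≤ (1 / (q + 1 : ℝ)) ^ m := step3
    _ ≤ ((m : ℝ) / k) ^ m := step4
    _ = (m : ℝ) ^ m / (k : ℝ) ^ m := div_pow _ _ _

/-- Embedding `W₂^{-j} ⊂ 𝔅_j`: for a positive integer `j`, if
`∑_{k≠0} |c_k|²/|k|^(2j) < ∞` (with `c₀` arbitrary), then
`sup_{0≤r<1} (1-r²)^(2j) ∑_{k∈ℤ} r^(2|k|) |c_k|² < ∞`. -/
theorem stmt16 (j : ℕ) (hj : 1 ≤ j) (c : ℤ → ℂ)
    (hc : Summable fun k : {k : ℤ // k ≠ 0} => ‖c k.1‖ ^ 2 / (k.1.natAbs : ℝ) ^ (2 * j)) :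
    ∃ C : ℝ, ∀ r ∈ Set.Ico (0:ℝ) 1,
      (1 - r ^ 2) ^ (2 * j) * ∑' k : ℤ, r ^ (2 * k.natAbs) * ‖c k‖ ^ 2 ≤ C := by
  set m := 2 * j with hmdef
  have hm : 1 ≤ m := by omega
  set M : ℝ := (m : ℝ) ^ m with hM
  set g : ℤ → ℝ := fun k => if k = 0 then ‖c 0‖ ^ 2 else M * (‖c k‖ ^ 2 / (k.natAbs : ℝ) ^ m)
    with hgdef
  have h1 : Summable fun k : {k : ℤ // k ≠ 0} => g k.1 := by
    apply Summable.congr (hc.mul_left M)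
    intro k
    simp [hgdef, k.2]
  have hg : Summable g := by
    have h2 : Summable fun k : ↥(({0} : Set ℤ)ᶜ) => g k :=
      (((Equiv.subtypeEquivRight (fun k => by simp) :
        ↥(({0} : Set ℤ)ᶜ) ≃ {k : ℤ // k ≠ 0})).summable_iff.mpr h1).congr fun x => rfl
    exact (Set.Finite.summable_compl_iff (Set.finite_singleton (0 : ℤ))).mp h2
  refine ⟨∑' k, g k, ?_⟩
  rintro r ⟨hr0, hr1⟩
  set t : ℝ := r ^ 2 with ht
  have ht0 : 0 ≤ t := by positivity
  have ht1 : t < 1 := by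
    have := pow_lt_one₀ hr0 hr1 (two_ne_zero)
    simpa [ht] using this
  have hpt : ∀ k : ℤ, r ^ (2 * k.natAbs) = t ^ k.natAbs := fun k => pow_mul r 2 k.natAbs
  have hbound : ∀ k : ℤ, (1 - t) ^ m * (r ^ (2 * k.natAbs) * ‖c k‖ ^ 2) ≤ g k := by
    intro k
    rw [hpt k]
    by_cases hk : k = 0
    · subst hk
      simp only [hgdef, if_pos rfl, Int.natAbs_zero, pow_zero, one_mul]
      have h1tm : (1 - t) ^ m ≤ 1 := pow_le_one₀ (by linarith) (by linarith)
      exact mul_le_of_le_one_left (by positivity) h1tm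
    · have hk1 : 1 ≤ k.natAbs := by omega
      have key := aux_key t ht0 ht1.le m k.natAbs hm hk1
      simp only [hgdef, if_neg hk]
      calc (1 - t) ^ m * (t ^ k.natAbs * ‖c k‖ ^ 2)
          = ((1 - t) ^ m * t ^ k.natAbs) * ‖c k‖ ^ 2 := by ring
        _ ≤ ((m : ℝ) ^ m / (k.natAbs : ℝ) ^ m) * ‖c k‖ ^ 2 :=
            mul_le_mul_of_nonneg_right key (by positivity)
        _ = M * (‖c k‖ ^ 2 / (k.natAbs : ℝ) ^ m) := by
            rw [hM]; ring
  have hfs : Summable fun k : ℤ => (1 - t) ^ m * (r ^ (2 * k.natAbs) * ‖c k‖ ^ 2) := by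
    exact Summable.of_nonneg_of_le
      (fun k => mul_nonneg (pow_nonneg (by linarith) m) (by positivity)) hbound hg
  have h1tpos : (0 : ℝ) < (1 - t) ^ m := by
    have : 0 < 1 - t := by linarith
    positivity
  have hfsum : Summable fun k : ℤ => r ^ (2 * k.natAbs) * ‖c k‖ ^ 2 := by
    have := (hfs.mul_left ((1 - t) ^ m)⁻¹)
    apply this.congr
    intro k
    rw [← mul_assoc, inv_mul_cancel₀ (ne_of_gt h1tpos), one_mul]
  have hrw : (1 - r ^ 2) ^ (2 * j) * ∑' k : ℤ, r ^ (2 * k.natAbs) * ‖c k‖ ^ 2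
      = ∑' k : ℤ, (1 - t) ^ m * (r ^ (2 * k.natAbs) * ‖c k‖ ^ 2) := by
    rw [tsum_mul_left]
  rw [hrw]
  exact Summable.tsum_le_tsum hbound hfs hg
end

section
/- For each positive integer j and each ε ∈ (0,1), if (c_k)_{k∈ℤ} satisfies sup_{0≤z<1} (1-z)^{2j} ∑_{k∈ℤ} z^{|k|} |c_k|² < ∞, then ∑_{k≠0} |c_k|²/|k|^{2j+ε} < ∞. (Embedding 𝔅_j ⊂ W₂^{-j-ε} for every ε > 0.) -/
open intervalIntegral MeasureTheory Real

private lemma cont_rpow_aux {p : ℝ} (hp : 0 ≤ p) : Continuous fun x : ℝ => x ^ p := by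
  rw [continuous_iff_continuousAt]
  exact fun x => Real.continuousAt_rpow_const x p (Or.inr hp)

/-- `∫ z in b..1, (1-z)^p = (1-b)^(p+1)/(p+1)` for `-1 < p`, `p ≠ 0` not needed. -/
private lemma int_one_sub_rpow {p b : ℝ} (hp : -1 < p) (hp0 : p + 1 ≠ 0) :
    ∫ z in b..(1:ℝ), (1 - z) ^ p = (1 - b) ^ (p + 1) / (p + 1) := by
  have h1 : (∫ z in b..(1:ℝ), (1 - z) ^ p) = ∫ u in (0:ℝ)..(1 - b), u ^ p := by
    have := intervalIntegral.integral_comp_sub_left (a := b) (b := (1:ℝ))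
      (fun u : ℝ => u ^ p) 1
    simpa using this
  rw [h1, integral_rpow (Or.inl hp), Real.zero_rpow hp0, sub_zero]

/-- Key integral lower bound: `n^(-a) ≤ 2^(a+1) * a * ∫₀¹ (1-z)^(a-1) z^n dz`. -/
private lemma key_bound {a : ℝ} (ha : 1 < a) {n : ℕ} (hn : 1 ≤ n) :
    (n : ℝ) ^ (-a) ≤ 2 ^ (a + 1) * a * ∫ z in (0:ℝ)..1, (1 - z) ^ (a - 1) * z ^ n := by
  have hnR : (0:ℝ) < n := by exact_mod_cast hn
  have hn1 : (1:ℝ) ≤ n := by exact_mod_cast hn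
  have ha1 : (0:ℝ) ≤ a - 1 := by linarith
  set b : ℝ := 1 - 1 / (2 * n) with hb
  have hb0 : 0 ≤ b := by
    have : 1 / (2 * (n:ℝ)) ≤ 1 := by
      rw [div_le_one (by linarith)]; linarith
    simp only [hb]; linarith
  have hb1 : b ≤ 1 := by
    have : 0 < 1 / (2 * (n:ℝ)) := by positivity
    simp only [hb]; linarith
  have hcont : Continuous fun z : ℝ => (1 - z) ^ (a - 1) * z ^ n :=
    ((cont_rpow_aux ha1).comp (continuous_const.sub continuous_id)).mul (continuous_pow n)
  -- z^n ≥ 1/2 on [b,1]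
  have hbn : (1:ℝ) / 2 ≤ b ^ n := by
    have h2 : (-2 : ℝ) ≤ -(1 / (2 * n)) := by
      have : 1 / (2 * (n:ℝ)) ≤ 1 := by rw [div_le_one (by linarith)]; linarith
      linarith
    have := one_add_mul_le_pow h2 n
    have hne : (n:ℝ) ≠ 0 := ne_of_gt hnR
    have heq : 1 + (n:ℝ) * -(1 / (2 * n)) = 1 / 2 := by field_simp; ring
    rw [heq] at this
    simpa [hb, sub_eq_add_neg] using this
  -- lower bound the integral on [b,1]
  have hsplit : (∫ z in (0:ℝ)..b, (1 - z) ^ (a - 1) * z ^ n)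
      + (∫ z in b..(1:ℝ), (1 - z) ^ (a - 1) * z ^ n)
      = ∫ z in (0:ℝ)..1, (1 - z) ^ (a - 1) * z ^ n :=
    intervalIntegral.integral_add_adjacent_intervals
      (hcont.intervalIntegrable _ _) (hcont.intervalIntegrable _ _)
  have hpos1 : 0 ≤ ∫ z in (0:ℝ)..b, (1 - z) ^ (a - 1) * z ^ n := by
    apply intervalIntegral.integral_nonneg hb0
    intro u hu
    have hu0 : 0 ≤ u := hu.1
    have hu1 : u ≤ 1 := le_trans hu.2 hb1
    exact mul_nonneg (Real.rpow_nonneg (by linarith) _) (pow_nonneg hu0 _)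
  have hmono : (∫ z in b..(1:ℝ), (1 - z) ^ (a - 1) * (1/2))
      ≤ ∫ z in b..(1:ℝ), (1 - z) ^ (a - 1) * z ^ n := by
    apply intervalIntegral.integral_mono_on hb1
    · exact (((cont_rpow_aux ha1).comp (continuous_const.sub continuous_id)).mul
        continuous_const).intervalIntegrable _ _
    · exact hcont.intervalIntegrable _ _
    · intro z hz
      have hz0 : 0 ≤ z := le_trans hb0 hz.1
      have h1z : 0 ≤ (1 - z) ^ (a - 1) := Real.rpow_nonneg (by linarith [hz.2]) _
      have hzn : (1:ℝ)/2 ≤ z ^ n := le_trans hbn (pow_le_pow_left₀ hb0 hz.1 n)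
      exact mul_le_mul_of_nonneg_left hzn h1z
  have hval : (∫ z in b..(1:ℝ), (1 - z) ^ (a - 1) * (1/2))
      = (1/2) * ((1 / (2 * n)) ^ a / a) := by
    rw [intervalIntegral.integral_mul_const, int_one_sub_rpow (by linarith) (by linarith)]
    have : a - 1 + 1 = a := by ring
    rw [this]
    simp only [hb]
    ring_nf
  have hI : (1/2) * ((1 / (2 * n)) ^ a / a)
      ≤ ∫ z in (0:ℝ)..1, (1 - z) ^ (a - 1) * z ^ n := by
    rw [← hval, ← hsplit]
    linarith [hmono]
  have hpow : ((1:ℝ) / (2 * n)) ^ a = 2 ^ (-a) * (n:ℝ) ^ (-a) := by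
    rw [one_div, Real.inv_rpow (by positivity), Real.mul_rpow (by norm_num) hnR.le,
      mul_inv, ← Real.rpow_neg (by norm_num), ← Real.rpow_neg hnR.le]
  have heq : (n:ℝ) ^ (-a) = 2 ^ (a + 1) * a * ((1/2) * ((1 / (2 * n)) ^ a / a)) := by
    rw [hpow]
    have h2 : (2:ℝ) ^ (a + 1) = 2 ^ a * 2 := by
      rw [Real.rpow_add (by norm_num), Real.rpow_one]
    have h3 : (2:ℝ) ^ (-a) = (2 ^ a)⁻¹ := by rw [Real.rpow_neg (by norm_num)]
    rw [h2, h3]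
    have h2a : (2:ℝ) ^ a ≠ 0 := ne_of_gt (Real.rpow_pos_of_pos (by norm_num) _)
    have haa : a ≠ 0 := by linarith
    field_simp
  rw [heq]
  have hpos : (0:ℝ) < 2 ^ (a + 1) * a := by
    have := Real.rpow_pos_of_pos (show (0:ℝ) < 2 by norm_num) (a + 1)
    nlinarith
  exact mul_le_mul_of_nonneg_left hI hpos.le

/-- Embedding `𝔅_j ⊂ W₂^{-j-ε}`: for a positive integer `j` and `ε ∈ (0,1)`, if the series
`∑_{k∈ℤ} z^(|k|) |c_k|²` converges for every `z ∈ [0,1)` and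
`sup_{0≤z<1} (1-z)^(2j) ∑_{k∈ℤ} z^(|k|) |c_k|² < ∞`, then
`∑_{k≠0} |c_k|²/|k|^(2j+ε) < ∞`. -/
theorem stmt17 (j : ℕ) (hj : 1 ≤ j) (ε : ℝ) (hε : ε ∈ Set.Ioo (0:ℝ) 1) (c : ℤ → ℂ)
    (hsum : ∀ z ∈ Set.Ico (0:ℝ) 1, Summable fun k : ℤ => z ^ k.natAbs * ‖c k‖ ^ 2)
    (hb : ∃ C : ℝ, ∀ z ∈ Set.Ico (0:ℝ) 1,
      (1 - z) ^ (2 * j) * ∑' k : ℤ, z ^ k.natAbs * ‖c k‖ ^ 2 ≤ C) :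
    Summable fun k : {k : ℤ // k ≠ 0} =>
      ‖c k.1‖ ^ 2 / (k.1.natAbs : ℝ) ^ ((2 * j : ℝ) + ε) := by
  obtain ⟨hε0, hε1⟩ := hε
  obtain ⟨C, hC⟩ := hb
  set a : ℝ := (2 * j : ℝ) + ε with ha_def
  have ha : 1 < a := by
    have : (1:ℝ) ≤ (j:ℝ) := by exact_mod_cast hj
    simp only [ha_def]; nlinarith
  have ha1 : (0:ℝ) ≤ a - 1 := by linarith
  have hC0 : 0 ≤ C := by
    have h0 := hC 0 ⟨le_refl 0, zero_lt_one⟩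
    have : 0 ≤ ∑' k : ℤ, (0:ℝ) ^ k.natAbs * ‖c k‖ ^ 2 :=
      tsum_nonneg fun k => by positivity
    simpa using le_trans this (by simpa using h0)
  -- the integrable majorant
  have hint_maj : IntervalIntegrable (fun z : ℝ => C * (1 - z) ^ (ε - 1)) volume 0 1 := by
    have h1 : IntervalIntegrable (fun x : ℝ => x ^ (ε - 1)) volume 0 1 :=
      intervalIntegrable_rpow' (by linarith)
    have h2 := (h1.comp_sub_left 1)
    simp only [sub_zero, sub_self] at h2
    exact (h2.symm).const_mul C
  have hmaj_val : (∫ z in (0:ℝ)..1, C * (1 - z) ^ (ε - 1)) = C / ε := by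
    rw [intervalIntegral.integral_const_mul, int_one_sub_rpow (by linarith) (by linarith)]
    have : ε - 1 + 1 = ε := by ring
    rw [this]
    simp [Real.one_rpow]
    ring
  apply summable_of_sum_le (c := 2 ^ (a + 1) * a * (C / ε))
  · intro k
    positivity
  · intro u
    -- term-wise integral bound
    have hterm : ∀ k : {k : ℤ // k ≠ 0},
        ‖c k.1‖ ^ 2 / (k.1.natAbs : ℝ) ^ a
        ≤ 2 ^ (a + 1) * a *
          ∫ z in (0:ℝ)..1, ‖c k.1‖ ^ 2 * ((1 - z) ^ (a - 1) * z ^ k.1.natAbs) := by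
      intro k
      have hk1 : 1 ≤ k.1.natAbs := Int.natAbs_pos.mpr k.2
      have hkey := key_bound ha hk1
      have h2 : ‖c k.1‖ ^ 2 / (k.1.natAbs : ℝ) ^ a
          = ‖c k.1‖ ^ 2 * (k.1.natAbs : ℝ) ^ (-a) := by
        rw [Real.rpow_neg (Nat.cast_nonneg _), div_eq_mul_inv]
      rw [h2]
      have h3 : (∫ z in (0:ℝ)..1, ‖c k.1‖ ^ 2 * ((1 - z) ^ (a - 1) * z ^ k.1.natAbs))
          = ‖c k.1‖ ^ 2 * ∫ z in (0:ℝ)..1, (1 - z) ^ (a - 1) * z ^ k.1.natAbs :=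
        intervalIntegral.integral_const_mul _ _
      rw [h3]
      have h4 := mul_le_mul_of_nonneg_left hkey
        (show (0:ℝ) ≤ ‖c k.1‖ ^ 2 by positivity)
      calc ‖c k.1‖ ^ 2 * (k.1.natAbs : ℝ) ^ (-a)
          ≤ ‖c k.1‖ ^ 2 * (2 ^ (a + 1) * a *
              ∫ z in (0:ℝ)..1, (1 - z) ^ (a - 1) * z ^ k.1.natAbs) := h4
        _ = 2 ^ (a + 1) * a * (‖c k.1‖ ^ 2 *
              ∫ z in (0:ℝ)..1, (1 - z) ^ (a - 1) * z ^ k.1.natAbs) := by ring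
    calc ∑ k ∈ u, ‖c k.1‖ ^ 2 / (k.1.natAbs : ℝ) ^ a
        ≤ ∑ k ∈ u, 2 ^ (a + 1) * a *
            ∫ z in (0:ℝ)..1, ‖c k.1‖ ^ 2 * ((1 - z) ^ (a - 1) * z ^ k.1.natAbs) :=
          Finset.sum_le_sum fun k _ => hterm k
      _ = 2 ^ (a + 1) * a *
            ∫ z in (0:ℝ)..1, ∑ k ∈ u, ‖c k.1‖ ^ 2 * ((1 - z) ^ (a - 1) * z ^ k.1.natAbs) := by
          rw [← Finset.mul_sum]
          congr 1
          rw [intervalIntegral.integral_finset_sum]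
          intro k _
          exact (continuous_const.mul (((cont_rpow_aux ha1).comp
            (continuous_const.sub continuous_id)).mul
            (continuous_pow _))).intervalIntegrable _ _
      _ ≤ 2 ^ (a + 1) * a * ∫ z in (0:ℝ)..1, C * (1 - z) ^ (ε - 1) := by
          apply mul_le_mul_of_nonneg_left _ (by positivity)
          apply intervalIntegral.integral_mono_on zero_le_one _ hint_maj
          · -- pointwise bound
            intro z hz
            rcases eq_or_lt_of_le hz.2 with h1 | h1
            · -- z = 1
              have hz1 : z = 1 := h1
              subst hz1
              have : ∀ k ∈ u, ‖c k.1‖ ^ 2 * ((1 - (1:ℝ)) ^ (a - 1) * 1 ^ k.1.natAbs) = 0 := by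
                intro k _
                rw [sub_self, Real.zero_rpow (by linarith)]
                ring
              rw [Finset.sum_congr rfl this]
              simp [Real.zero_rpow (show ε - 1 ≠ 0 by linarith)]
            · -- z < 1
              have hz0 : 0 ≤ z := hz.1
              have h1z : 0 < 1 - z := by linarith
              have hfac : ∑ k ∈ u, ‖c k.1‖ ^ 2 * ((1 - z) ^ (a - 1) * z ^ k.1.natAbs)
                  = (1 - z) ^ (a - 1) * ∑ k ∈ u, z ^ k.1.natAbs * ‖c k.1‖ ^ 2 := by
                rw [Finset.mul_sum]
                exact Finset.sum_congr rfl fun k _ => by ring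
              rw [hfac]
              have hsum' := hsum z ⟨hz0, h1⟩
              have hS : ∑ k ∈ u, z ^ k.1.natAbs * ‖c k.1‖ ^ 2
                  ≤ ∑' k : ℤ, z ^ k.natAbs * ‖c k‖ ^ 2 := by
                have himg : ∑ m ∈ u.image Subtype.val, z ^ m.natAbs * ‖c m‖ ^ 2
                    = ∑ k ∈ u, z ^ k.1.natAbs * ‖c k.1‖ ^ 2 :=
                  Finset.sum_image fun x _ y _ h => Subtype.ext h
                rw [← himg]
                exact Summable.sum_le_tsum _ (fun i _ => by positivity) hsum'
              have hT := hC z ⟨hz0, h1⟩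
              have hsplitp : (1 - z) ^ (a - 1)
                  = (1 - z) ^ (ε - 1) * (1 - z) ^ (2 * j) := by
                rw [← Real.rpow_natCast (1 - z) (2 * j), ← Real.rpow_add h1z]
                congr 1
                push_cast
                simp only [ha_def]
                ring
              have hnn : (0:ℝ) ≤ (1 - z) ^ (a - 1) := Real.rpow_nonneg h1z.le _
              have hnn2 : (0:ℝ) ≤ (1 - z) ^ (ε - 1) := Real.rpow_nonneg h1z.le _
              calc (1 - z) ^ (a - 1) * ∑ k ∈ u, z ^ k.1.natAbs * ‖c k.1‖ ^ 2
                  ≤ (1 - z) ^ (a - 1) * ∑' k : ℤ, z ^ k.natAbs * ‖c k‖ ^ 2 :=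
                    mul_le_mul_of_nonneg_left hS hnn
                _ = (1 - z) ^ (ε - 1)
                    * ((1 - z) ^ (2 * j) * ∑' k : ℤ, z ^ k.natAbs * ‖c k‖ ^ 2) := by
                    rw [hsplitp]; ring
                _ ≤ (1 - z) ^ (ε - 1) * C := mul_le_mul_of_nonneg_left hT hnn2
                _ = C * (1 - z) ^ (ε - 1) := mul_comm _ _
          · -- integrability of the sum
            apply ContinuousOn.intervalIntegrable
            apply Continuous.continuousOn
            apply continuous_finset_sum
            intro k _
            exact continuous_const.mul (((cont_rpow_aux ha1).comp
              (continuous_const.sub continuous_id)).mul (continuous_pow _))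
      _ = 2 ^ (a + 1) * a * (C / ε) := by rw [hmaj_val]
end

section
/- Let Φ be a complete Hausdorff topological vector space with continuous embeddings 𝔄 ⊂ Φ ⊂ 𝔄′, and let u be m-harmonic in the unit disk (so u(r,·) ∈ 𝔄 for each r < 1 and u(r,·) → u(1,·) in 𝔄′ as r → 1). Then u(r,·) converges in Φ as r → 1 (to an element of Φ) if and only if the set {u(r,·) : 0 ≤ r < 1} is relatively compact in Φ. -/
open Filter

/-- Abstract form of Theorem 2 of the paper.  Let `Φ` be a complete Hausdorff topological
vector space with continuous embeddings `𝔄 ⊂ Φ ⊂ 𝔄′`; here the (Hausdorff) space `X` plays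
the role of `𝔄′` and `e : Φ → X` is the continuous injective embedding.  Let `g : r ↦ u(r,·)`
be the (continuous on `[0,1)`, with values in `𝔄 ⊂ Φ`) family of circle restrictions of an
`m`-harmonic function, which converges in `𝔄′` to its boundary hyperfunction `L = u(1,·)` as
`r → 1⁻`.  Then `g` converges in `Φ` as `r → 1⁻` (to an element of `Φ`) if and only if the
set `{u(r,·) : 0 ≤ r < 1}` is relatively compact in `Φ`. -/
theorem stmt19 {Φ X : Type*}
    [AddCommGroup Φ] [Module ℝ Φ] [UniformSpace Φ] [IsUniformAddGroup Φ]
    [ContinuousSMul ℝ Φ] [CompleteSpace Φ] [T2Space Φ]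
    [TopologicalSpace X] [T2Space X]
    (e : Φ → X) (he : Continuous e) (hinj : Function.Injective e)
    (g : ℝ → Φ) (hg : ContinuousOn g (Set.Ico 0 1))
    (L : X)
    (hL : Tendsto (fun r => e (g r)) (nhdsWithin 1 (Set.Iio 1)) (nhds L)) :
    (∃ F : Φ, Tendsto g (nhdsWithin 1 (Set.Iio 1)) (nhds F)) ↔
      IsCompact (closure (g '' Set.Ico 0 1)) := by
  have hIco_mem : Set.Ico (0:ℝ) 1 ∈ nhdsWithin (1:ℝ) (Set.Iio 1) := by
    have h0 : Set.Ioi (0:ℝ) ∈ nhds (1:ℝ) := Ioi_mem_nhds (by norm_num)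
    filter_upwards [mem_nhdsWithin_of_mem_nhds h0, self_mem_nhdsWithin] with r hr hr'
    exact ⟨le_of_lt hr, hr'⟩
  constructor
  · rintro ⟨F, hF⟩
    -- extend g continuously to Icc 0 1
    set h : ℝ → Φ := fun r => if r < 1 then g r else F with hh
    have hcont : ContinuousOn h (Set.Icc 0 1) := by
      intro r hr
      rcases lt_or_eq_of_le hr.2 with hr1 | hr1
      · -- r < 1
        have hIco : Set.Ico (0:ℝ) 1 ∈ nhdsWithin r (Set.Icc 0 1) := by
          have : Set.Iio (1:ℝ) ∈ nhds r := Iio_mem_nhds hr1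
          filter_upwards [mem_nhdsWithin_of_mem_nhds this, self_mem_nhdsWithin]
            with x hx hx' using ⟨hx'.1, hx⟩
        have hgw : ContinuousWithinAt g (Set.Icc 0 1) r :=
          (hg r ⟨hr.1, hr1⟩).mono_of_mem_nhdsWithin hIco
        apply hgw.congr_of_eventuallyEq
        · filter_upwards [hIco] with x hx
          simp [hh, hx.2]
        · simp [hh, hr1]
      · -- r = 1
        subst hr1
        have h1 : nhdsWithin (1:ℝ) (Set.Icc 0 1) ≤
            nhdsWithin 1 (Set.Iio 1) ⊔ pure 1 := by
          rw [← nhdsWithin_singleton, ← nhdsWithin_union]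
          apply nhdsWithin_mono
          intro x hx
          rcases lt_or_eq_of_le hx.2 with h | h
          · exact Or.inl h
          · exact Or.inr h
        have ht : Tendsto h (nhdsWithin 1 (Set.Iio 1) ⊔ pure 1) (nhds F) := by
          rw [tendsto_sup]
          constructor
          · apply hF.congr'
            filter_upwards [self_mem_nhdsWithin] with x hx
            exact (if_pos hx).symm
          · simpa [hh] using tendsto_pure_nhds h 1
        unfold ContinuousWithinAt
        have : h 1 = F := by simp [hh]
        rw [this]
        exact ht.mono_left h1
    have hK : IsCompact (h '' Set.Icc 0 1) := (isCompact_Icc).image_of_continuousOn hcont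
    apply hK.of_isClosed_subset isClosed_closure
    rw [hK.isClosed.closure_subset_iff]
    intro y hy
    obtain ⟨r, hr, rfl⟩ := hy
    exact ⟨r, ⟨hr.1, le_of_lt hr.2⟩, by simp [hh, hr.2]⟩
  · intro hK
    set K := closure (g '' Set.Ico 0 1)
    have hmem : ∀ᶠ r in nhdsWithin (1:ℝ) (Set.Iio 1), g r ∈ K := by
      filter_upwards [hIco_mem] with r hr
      exact subset_closure ⟨r, hr, rfl⟩
    have hKmem : K ∈ map g (nhdsWithin (1:ℝ) (Set.Iio 1)) := mem_map.2 hmem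
    -- there exists a cluster point
    obtain ⟨F, hFK, hFcl⟩ := hK.exists_clusterPt (le_principal_iff.2 hKmem)
    -- any cluster point x satisfies e x = L
    have key : ∀ x, MapClusterPt x (nhdsWithin (1:ℝ) (Set.Iio 1)) g → e x = L := by
      intro x hx
      have h1 : MapClusterPt (e x) (nhdsWithin (1:ℝ) (Set.Iio 1)) (e ∘ g) :=
        hx.tendsto_comp he.continuousAt
      have h2 : ClusterPt (e x) (map (fun r => e (g r)) (nhdsWithin (1:ℝ) (Set.Iio 1))) := h1
      have h3 := h2.mono (le_trans hL (le_refl _))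
      exact eq_of_nhds_neBot (h2.mono hL)
    refine ⟨F, hK.tendsto_nhds_of_unique_mapClusterPt hmem fun x _ hx => ?_⟩
    exact hinj ((key x hx).trans (key F hFcl).symm)
end
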